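/- arXiv:2104.05245 — 3 statements merged into one kernel-verified Lean document; each statement's English description precedes it below -/
import Mathlib

section
/- Let f be differentiable with L-Lipschitz gradient and bounded below by f*. Define the gradient descent iterates x_{t+1} = x_t − (1/L)∇f(x_t). Then for every T ≥ 1, (1/T) ∑_{t=1}^T ‖∇f(x_t)‖² ≤ 2L (f(x_1) − f*) / T. -/
open InnerProductSpace

lemma quad_upper {d : ℕ} (f : EuclideanSpace ℝ (Fin d) → ℝ) (L : ℝ) (hL : 0 < L)
    (hdiff : Differentiable ℝ f)
    (hlip : ∀ x y, ‖gradient f x - gradient f y‖ ≤ L * ‖x - y‖)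
    (x v : EuclideanSpace ℝ (Fin d)) :
    f (x + v) ≤ f x + inner ℝ (gradient f x) v + L / 2 * ‖v‖ ^ 2 := by
  set h : ℝ → ℝ := fun s =>
    f (x + s • v) - s * inner ℝ (gradient f x) v - L * s ^ 2 / 2 * ‖v‖ ^ 2 with hh
  have hderiv : ∀ s : ℝ, HasDerivAt h
      ((inner ℝ (gradient f (x + s • v)) v : ℝ) - inner ℝ (gradient f x) v - L * s * ‖v‖ ^ 2) s := by
    intro s
    have hφ : HasDerivAt (fun s : ℝ => x + s • v) v s := by
      simpa using ((hasDerivAt_id s).smul_const v).const_add x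
    have hf : HasDerivAt (fun s : ℝ => f (x + s • v))
        ((fderiv ℝ f (x + s • v)) v) s :=
      (hdiff (x + s • v)).hasFDerivAt.comp_hasDerivAt s hφ
    have hfd : (fderiv ℝ f (x + s • v)) v = (inner ℝ (gradient f (x + s • v)) v : ℝ) := by
      have := (hdiff (x + s • v)).hasGradientAt.hasFDerivAt
      rw [this.fderiv]
      simp [InnerProductSpace.toDual_apply_apply]
    rw [hfd] at hf
    have h1 : HasDerivAt (fun s : ℝ => s * inner ℝ (gradient f x) v)
        (inner ℝ (gradient f x) v) s := by
      simpa using (hasDerivAt_id s).mul_const (inner ℝ (gradient f x) v : ℝ)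
    have h2 : HasDerivAt (fun s : ℝ => L * s ^ 2 / 2 * ‖v‖ ^ 2) (L * s * ‖v‖ ^ 2) s := by
      have : HasDerivAt (fun s : ℝ => s ^ 2) (2 * s) s := by
        simpa using hasDerivAt_pow 2 s
      have := (((this.const_mul L).div_const 2).mul_const (‖v‖ ^ 2))
      refine this.congr_deriv ?_
      ring
    exact (hf.sub h1).sub h2
  have hanti : AntitoneOn h (Set.Icc (0 : ℝ) 1) := by
    apply antitoneOn_of_deriv_nonpos (convex_Icc 0 1)
    · exact fun s _ => ((hderiv s).continuousAt).continuousWithinAt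
    · intro s _
      exact (hderiv s).differentiableAt.differentiableWithinAt
    · intro s hs
      rw [interior_Icc] at hs
      rw [(hderiv s).deriv]
      have key : (inner ℝ (gradient f (x + s • v)) v : ℝ) - inner ℝ (gradient f x) v
          ≤ L * s * ‖v‖ ^ 2 := by
        have h1 : (inner ℝ (gradient f (x + s • v)) v : ℝ) - inner ℝ (gradient f x) v
            = inner ℝ (gradient f (x + s • v) - gradient f x) v := by
          rw [inner_sub_left]
        rw [h1]
        calc (inner ℝ (gradient f (x + s • v) - gradient f x) v : ℝ)
            ≤ ‖gradient f (x + s • v) - gradient f x‖ * ‖v‖ :=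
              real_inner_le_norm _ _
          _ ≤ (L * ‖(x + s • v) - x‖) * ‖v‖ := by
              apply mul_le_mul_of_nonneg_right (hlip _ _) (norm_nonneg _)
          _ = L * s * ‖v‖ ^ 2 := by
              rw [add_sub_cancel_left, norm_smul]
              simp [Real.norm_eq_abs, abs_of_pos hs.1]
              ring
      linarith
  have h10 : h 1 ≤ h 0 := hanti (by norm_num) (by norm_num) (by norm_num)
  have e1 : h 1 = f (x + v) - inner ℝ (gradient f x) v - L / 2 * ‖v‖ ^ 2 := by
    simp only [hh, one_smul, one_pow, mul_one, one_mul]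
  have e0 : h 0 = f x := by
    simp only [hh, zero_smul, add_zero, zero_mul, zero_pow, mul_zero, sub_zero, zero_sub,
      ne_eq, OfNat.ofNat_ne_zero, not_false_eq_true, zero_div]
  rw [e1, e0] at h10
  linarith

theorem stmt2 {d : ℕ} (f : EuclideanSpace ℝ (Fin d) → ℝ) (L : ℝ) (hL : 0 < L)
    (hdiff : Differentiable ℝ f)
    (hlip : ∀ x y, ‖gradient f x - gradient f y‖ ≤ L * ‖x - y‖)
    (fstar : ℝ) (hbdd : ∀ x, fstar ≤ f x)
    (x : ℕ → EuclideanSpace ℝ (Fin d))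
    (hrec : ∀ t, x (t + 1) = x t - (1 / L) • gradient f (x t))
    (T : ℕ) (hT : 1 ≤ T) :
    (1 / (T : ℝ)) * ∑ t ∈ Finset.Icc 1 T, ‖gradient f (x t)‖ ^ 2
      ≤ 2 * L * (f (x 1) - fstar) / (T : ℝ) := by
  have hstep : ∀ t : ℕ, ‖gradient f (x t)‖ ^ 2 ≤ 2 * L * (f (x t) - f (x (t + 1))) := by
    intro t
    have := quad_upper f L hL hdiff hlip (x t) (-(1 / L) • gradient f (x t))
    have hx : x (t + 1) = x t + -(1 / L) • gradient f (x t) := by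
      rw [hrec t]; module
    rw [← hx] at this
    have hinner : (inner ℝ (gradient f (x t)) (-(1 / L) • gradient f (x t)) : ℝ)
        = -(1 / L) * ‖gradient f (x t)‖ ^ 2 := by
      rw [real_inner_smul_right, real_inner_self_eq_norm_sq]
    have hnorm : ‖-(1 / L) • gradient f (x t)‖ ^ 2 = (1 / L) ^ 2 * ‖gradient f (x t)‖ ^ 2 := by
      rw [norm_smul, mul_pow]
      congr 1
      rw [Real.norm_eq_abs, abs_neg, sq_abs]
    rw [hinner, hnorm] at this
    have hL' : L ≠ 0 := ne_of_gt hL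
    set G := ‖gradient f (x t)‖ ^ 2 with hG
    have e : -(1 / L) * G + L / 2 * ((1 / L) ^ 2 * G) = -(1 / (2 * L)) * G := by
      field_simp; ring
    have h3 : f (x (t + 1)) ≤ f (x t) - 1 / (2 * L) * G := by linarith
    have h4 : 2 * L * (1 / (2 * L) * G) ≤ 2 * L * (f (x t) - f (x (t + 1))) :=
      mul_le_mul_of_nonneg_left (by linarith) (by linarith)
    have h5 : 2 * L * (1 / (2 * L) * G) = G := by field_simp
    linarith
  have hsum : ∑ t ∈ Finset.Icc 1 T, ‖gradient f (x t)‖ ^ 2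
      ≤ 2 * L * (f (x 1) - fstar) := by
    calc ∑ t ∈ Finset.Icc 1 T, ‖gradient f (x t)‖ ^ 2
        ≤ ∑ t ∈ Finset.Icc 1 T, 2 * L * (f (x t) - f (x (t + 1))) :=
          Finset.sum_le_sum fun t _ => hstep t
      _ = 2 * L * ∑ t ∈ Finset.Icc 1 T, (f (x t) - f (x (t + 1))) := by
          rw [Finset.mul_sum]
      _ = 2 * L * (f (x 1) - f (x (T + 1))) := by
          congr 1
          induction T, hT using Nat.le_induction with
          | base => simp
          | succ n hn ih =>
            rw [Finset.sum_Icc_succ_top (by omega), ih]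
            ring
      _ ≤ 2 * L * (f (x 1) - fstar) := by
          have := hbdd (x (T + 1))
          have h2L : (0:ℝ) ≤ 2 * L := by linarith
          apply mul_le_mul_of_nonneg_left _ h2L
          linarith
  have hTpos : (0:ℝ) < T := by exact_mod_cast hT
  calc (1 / (T : ℝ)) * ∑ t ∈ Finset.Icc 1 T, ‖gradient f (x t)‖ ^ 2
      ≤ (1 / (T : ℝ)) * (2 * L * (f (x 1) - fstar)) :=
        mul_le_mul_of_nonneg_left hsum (by positivity)
    _ = 2 * L * (f (x 1) - fstar) / (T : ℝ) := by ring
end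

section
/- In the error-compensated SGD algorithm, define ṽ_t = x_t − γΩ_{t−1} with Ω_t = δ_t + (1/N)∑_{n=1}^N δ_t^{(n)}, where v_t^{(n)} = g_t^{(n)} + δ_{t−1}^{(n)}, δ_t^{(n)} = v_t^{(n)} − Q(v_t^{(n)}), v_t = (1/N)∑_n Q(v_t^{(n)}) + δ_{t−1}, δ_t = v_t − Q(v_t), and x_{t+1} = x_t − γQ(v_t). Then the compensated iterates satisfy ṽ_{t+1} = ṽ_t − γ(1/N)∑_{n=1}^N g_t^{(n)}. -/
theorem stmt11 {E : Type*} [AddCommGroup E] [Module ℝ E] {N : ℕ} (γ : ℝ)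
    (g v : ℕ → Fin N → E) (δ : ℕ → Fin N → E) (V Δ x : ℕ → E) (Q : E → E)
    (hv : ∀ t n, v (t + 1) n = g (t + 1) n + δ t n)
    (hδ : ∀ t n, δ (t + 1) n = v (t + 1) n - Q (v (t + 1) n))
    (hV : ∀ t, V (t + 1) = (N : ℝ)⁻¹ • ∑ n, Q (v (t + 1) n) + Δ t)
    (hΔ : ∀ t, Δ (t + 1) = V (t + 1) - Q (V (t + 1)))
    (hx : ∀ t, x (t + 2) = x (t + 1) - γ • Q (V (t + 1))) (t : ℕ) :
    x (t + 2) - γ • (Δ (t + 1) + (N : ℝ)⁻¹ • ∑ n, δ (t + 1) n)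
      = x (t + 1) - γ • (Δ t + (N : ℝ)⁻¹ • ∑ n, δ t n)
        - γ • ((N : ℝ)⁻¹ • ∑ n, g (t + 1) n) := by
  simp only [hx, hΔ, hV, hδ, hv, Finset.sum_sub_distrib, Finset.sum_add_distrib,
    smul_add, smul_sub]
  abel
end

section
/- Consider the decentralized recursion X_{t+1} = (X_t − γG_t)W with X_1 having identical columns, where W ∈ ℝ^{N×N} is symmetric doubly stochastic with second largest absolute eigenvalue ρ < 1. Let X̄_t = X_t(𝟙𝟙ᵀ/N). Then for every T, ∑_{t=1}^T ‖X_t − X̄_t‖_F² ≤ (γ²ρ²/(1−ρ)²) ∑_{t=1}^T ‖G_t‖_F². -/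
open Matrix
open scoped RealInnerProductSpace

lemma geo_aux {ρ : ℝ} (hr0 : 0 ≤ ρ) (hr1 : ρ < 1) (m : ℕ) :
    ∑ j ∈ Finset.range m, ρ ^ (j + 1) ≤ ρ / (1 - ρ) := by
  have hne : ρ ≠ 1 := ne_of_lt hr1
  have hne' : ρ - 1 ≠ 0 := by intro h; apply hne; linarith
  have hpos : 0 < 1 - ρ := by linarith
  have h0 : ∑ j ∈ Finset.range m, ρ ^ (j + 1) = ρ * ∑ j ∈ Finset.range m, ρ ^ j := by
    rw [Finset.mul_sum]; exact Finset.sum_congr rfl fun j _ => by ring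
  rw [h0, geom_sum_eq hne, le_div_iff₀ hpos, mul_assoc]
  have key : (ρ ^ m - 1) / (ρ - 1) * (1 - ρ) = 1 - ρ ^ m := by
    field_simp
    ring
  rw [key]
  nlinarith [pow_nonneg hr0 m]

lemma scalar_aux {ρ : ℝ} (hr0 : 0 ≤ ρ) (hr1 : ρ < 1) (s g : ℕ → ℝ)
    (hs0 : ∀ t, 0 ≤ s t) (hg0 : ∀ t, 0 ≤ g t) (hs1 : s 1 = 0)
    (hstep : ∀ t, 1 ≤ t → s (t + 1) ≤ ρ * (s t + g t)) (T : ℕ) :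
    ∑ t ∈ Finset.Icc 1 T, (s t) ^ 2 ≤ ρ ^ 2 / (1 - ρ) ^ 2 * ∑ t ∈ Finset.Icc 1 T, (g t) ^ 2 := by
  have hpos : 0 < 1 - ρ := by linarith
  -- unrolled bound
  have unroll : ∀ t : ℕ, s (t + 1) ≤ ∑ k ∈ Finset.Icc 1 t, ρ ^ (t + 1 - k) * g k := by
    intro t
    induction t with
    | zero => simp [hs1]
    | succ t ih =>
      have h1t : (1:ℕ) ≤ t + 1 := Nat.le_add_left 1 t
      calc s (t + 1 + 1) ≤ ρ * (s (t + 1) + g (t + 1)) := hstep (t + 1) h1t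
        _ ≤ ρ * ((∑ k ∈ Finset.Icc 1 t, ρ ^ (t + 1 - k) * g k) + g (t + 1)) := by
            apply mul_le_mul_of_nonneg_left _ hr0
            exact add_le_add ih le_rfl
        _ = (∑ k ∈ Finset.Icc 1 t, ρ ^ (t + 2 - k) * g k) + ρ ^ (t + 2 - (t+1)) * g (t + 1) := by
            rw [mul_add, Finset.mul_sum]
            congr 1
            · apply Finset.sum_congr rfl
              intro k hk
              have hk' : k ≤ t + 1 := le_trans (Finset.mem_Icc.mp hk).2 (Nat.le_succ t)
              have he : t + 2 - k = (t + 1 - k) + 1 := by omega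
              rw [he, pow_succ]; ring
            · have he : t + 2 - (t + 1) = 1 := by omega
              rw [he, pow_one]
        _ = ∑ k ∈ Finset.Icc 1 (t + 1), ρ ^ (t + 1 + 1 - k) * g k := by
            rw [Finset.sum_Icc_succ_top (Nat.le_add_left 1 t)]
  -- rewrite LHS as range sum
  have hL : ∑ t ∈ Finset.Icc 1 T, (s t) ^ 2 = ∑ i ∈ Finset.range T, (s (i + 1)) ^ 2 := by
    rw [← Finset.Ico_add_one_right_eq_Icc, Finset.sum_Ico_eq_sum_range]
    simp [add_comm]
  rw [hL]
  -- per-term bound via Cauchy-Schwarz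
  have per : ∀ i : ℕ, (s (i + 1)) ^ 2
      ≤ (ρ / (1 - ρ)) * ∑ k ∈ Finset.Icc 1 i, ρ ^ (i + 1 - k) * (g k) ^ 2 := by
    intro i
    have hcs1 : (s (i + 1)) ^ 2 ≤ (∑ k ∈ Finset.Icc 1 i, ρ ^ (i + 1 - k) * g k) ^ 2 :=
      pow_le_pow_left₀ (hs0 _) (unroll i) 2
    have hcs2 : (∑ k ∈ Finset.Icc 1 i, ρ ^ (i + 1 - k) * g k) ^ 2
        ≤ (∑ k ∈ Finset.Icc 1 i, ρ ^ (i + 1 - k)) * ∑ k ∈ Finset.Icc 1 i, ρ ^ (i + 1 - k) * (g k) ^ 2 := by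
      have hmain := Finset.sum_mul_sq_le_sq_mul_sq (Finset.Icc 1 i)
        (fun k => Real.sqrt (ρ ^ (i + 1 - k))) (fun k => Real.sqrt (ρ ^ (i + 1 - k)) * g k)
      have e1 : ∀ k ∈ Finset.Icc 1 i,
          Real.sqrt (ρ ^ (i+1-k)) * (Real.sqrt (ρ ^ (i+1-k)) * g k) = ρ ^ (i+1-k) * g k := by
        intro k _
        rw [← mul_assoc, Real.mul_self_sqrt (pow_nonneg hr0 _)]
      have e2 : ∀ k ∈ Finset.Icc 1 i, (Real.sqrt (ρ ^ (i+1-k))) ^ 2 = ρ ^ (i+1-k) := by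
        intro k _
        exact Real.sq_sqrt (pow_nonneg hr0 _)
      have e3 : ∀ k ∈ Finset.Icc 1 i,
          (Real.sqrt (ρ ^ (i+1-k)) * g k) ^ 2 = ρ ^ (i+1-k) * (g k) ^ 2 := by
        intro k _
        rw [mul_pow, Real.sq_sqrt (pow_nonneg hr0 _)]
      rw [Finset.sum_congr rfl e1, Finset.sum_congr rfl e2, Finset.sum_congr rfl e3] at hmain
      exact hmain
    have h3 : ∑ k ∈ Finset.Icc 1 i, ρ ^ (i + 1 - k) ≤ ρ / (1 - ρ) := by
      have he : ∑ k ∈ Finset.Icc 1 i, ρ ^ (i + 1 - k) = ∑ j ∈ Finset.range i, ρ ^ (j + 1) := by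
        apply Finset.sum_bij (fun k _ => i - k)
        · intro a ha; simp at ha ⊢; omega
        · intro a ha b hb; simp at ha hb; omega
        · intro b hb; simp at hb ⊢; exact ⟨i - b, by omega, by omega⟩
        · intro a ha; simp at ha; congr 1; omega
      rw [he]; exact geo_aux hr0 hr1 i
    calc (s (i+1))^2 ≤ (∑ k ∈ Finset.Icc 1 i, ρ ^ (i + 1 - k)) * ∑ k ∈ Finset.Icc 1 i, ρ ^ (i + 1 - k) * (g k) ^ 2 := hcs1.trans hcs2
      _ ≤ (ρ / (1 - ρ)) * ∑ k ∈ Finset.Icc 1 i, ρ ^ (i + 1 - k) * (g k) ^ 2 := by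
          apply mul_le_mul_of_nonneg_right h3
          exact Finset.sum_nonneg fun k _ => mul_nonneg (pow_nonneg hr0 _) (sq_nonneg _)
  -- sum up and swap
  calc ∑ i ∈ Finset.range T, (s (i + 1)) ^ 2
      ≤ ∑ i ∈ Finset.range T, (ρ / (1 - ρ)) * ∑ k ∈ Finset.Icc 1 i, ρ ^ (i + 1 - k) * (g k) ^ 2 :=
        Finset.sum_le_sum fun i _ => per i
    _ = (ρ / (1 - ρ)) * ∑ i ∈ Finset.range T, ∑ k ∈ Finset.Icc 1 i, ρ ^ (i + 1 - k) * (g k) ^ 2 := by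
        rw [Finset.mul_sum]
    _ = (ρ / (1 - ρ)) * ∑ k ∈ Finset.Icc 1 T, (∑ i ∈ Finset.range T, if k ≤ i then ρ ^ (i + 1 - k) else 0) * (g k) ^ 2 := by
        congr 1
        have expand : ∀ i ∈ Finset.range T, ∑ k ∈ Finset.Icc 1 i, ρ ^ (i + 1 - k) * (g k) ^ 2
            = ∑ k ∈ Finset.Icc 1 T, (if k ≤ i then ρ ^ (i + 1 - k) * (g k) ^ 2 else 0) := by
          intro i hi
          rw [Finset.mem_range] at hi
          have hf : Finset.Icc 1 i = (Finset.Icc 1 T).filter (fun k => k ≤ i) := by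
            ext x; simp only [Finset.mem_Icc, Finset.mem_filter]; omega
          rw [hf, Finset.sum_filter]
        rw [Finset.sum_congr rfl expand, Finset.sum_comm]
        apply Finset.sum_congr rfl
        intro k _
        rw [Finset.sum_mul]
        apply Finset.sum_congr rfl
        intro i _
        split <;> simp
    _ ≤ (ρ / (1 - ρ)) * ∑ k ∈ Finset.Icc 1 T, (ρ / (1 - ρ)) * (g k) ^ 2 := by
        apply mul_le_mul_of_nonneg_left _ (div_nonneg hr0 (le_of_lt hpos))
        apply Finset.sum_le_sum
        intro k hk
        apply mul_le_mul_of_nonneg_right _ (sq_nonneg _)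
        have he : ∑ i ∈ Finset.range T, (if k ≤ i then ρ ^ (i + 1 - k) else 0)
            = ∑ i ∈ Finset.Ico k T, ρ ^ (i + 1 - k) := by
          rw [← Finset.sum_filter]
          congr 1
          ext x
          simp [Finset.mem_filter, Finset.mem_Ico, and_comm]
        rw [he, Finset.sum_Ico_eq_sum_range]
        have he2 : ∀ j ∈ Finset.range (T - k), ρ ^ (k + j + 1 - k) = ρ ^ (j + 1) := by
          intro j _; congr 1; omega
        rw [Finset.sum_congr rfl he2]
        exact geo_aux hr0 hr1 (T - k)
    _ = ρ ^ 2 / (1 - ρ) ^ 2 * ∑ t ∈ Finset.Icc 1 T, (g t) ^ 2 := by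
        rw [Finset.mul_sum, Finset.mul_sum]
        apply Finset.sum_congr rfl
        intro k _
        rw [← mul_assoc]
        congr 1
        field_simp


lemma spectral_aux {N : ℕ} (W : Matrix (Fin N) (Fin N) ℝ)
    (hherm : W.IsHermitian) (hrow : W *ᵥ (fun _ => 1) = fun _ => 1)
    (i0 : Fin N) (hi0 : hherm.eigenvalues i0 = 1)
    {ρ : ℝ} (hub : ∀ i, i ≠ i0 → |hherm.eigenvalues i| ≤ ρ) (hρlt : ρ < 1)
    (v : Fin N → ℝ) :
    ∑ j, (((W - (N:ℝ)⁻¹ • Matrix.of (fun _ _ => (1:ℝ))) *ᵥ v) j) ^ 2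
      ≤ ρ ^ 2 * ∑ j, (v j) ^ 2 := by
  classical
  set lam := hherm.eigenvalues with hlam
  set b := hherm.eigenvectorBasis with hbdef
  set J : Matrix (Fin N) (Fin N) ℝ := (N:ℝ)⁻¹ • Matrix.of (fun _ _ => (1:ℝ)) with hJdef
  set ones : Fin N → ℝ := fun _ => (1:ℝ) with honesdef
  have h1 : ∀ j, W *ᵥ (WithLp.equiv 2 _) (b j) = lam j • (WithLp.equiv 2 _) (b j) :=
    hherm.mulVec_eigenvectorBasis
  have h2 : ∀ x y : EuclideanSpace ℝ (Fin N), ⟪x, y⟫ = ((WithLp.equiv 2 _) x) ⬝ᵥ ((WithLp.equiv 2 _) y) := by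
    intro x y
    simp [PiLp.inner_apply, RCLike.inner_apply, dotProduct, WithLp.equiv_apply, mul_comm]
  have hWt : Wᵀ = W := by
    ext i j
    have := congrFun (congrFun hherm.eq i) j
    simpa using this
  have hdotW : ∀ u w : Fin N → ℝ, u ⬝ᵥ (W *ᵥ w) = (W *ᵥ u) ⬝ᵥ w := by
    intro u w
    rw [Matrix.dotProduct_mulVec, ← Matrix.mulVec_transpose, hWt]
  -- Parseval
  have pars : ∀ w : Fin N → ℝ,
      ∑ j, (w j) ^ 2 = ∑ i, (((WithLp.equiv 2 _) (b i)) ⬝ᵥ w) ^ 2 := by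
    intro w
    have hp := b.sum_inner_mul_inner ((WithLp.equiv 2 _).symm w) ((WithLp.equiv 2 _).symm w)
    simp only [h2, Equiv.apply_symm_apply] at hp
    have e1 : ∀ i : Fin N, ((w : Fin N → ℝ) ⬝ᵥ (WithLp.equiv 2 _) (b i)) = ((WithLp.equiv 2 _) (b i)) ⬝ᵥ w :=
      fun i => dotProduct_comm _ _
    rw [Finset.sum_congr rfl (fun i _ => by rw [e1 i])] at hp
    calc ∑ j, (w j)^2 = ∑ j, w j * w j := by
          apply Finset.sum_congr rfl; intro j _; ring
      _ = w ⬝ᵥ w := rfl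
      _ = ∑ i, ((WithLp.equiv 2 _) (b i)) ⬝ᵥ w * (((WithLp.equiv 2 _) (b i)) ⬝ᵥ w) := hp.symm
      _ = ∑ i, (((WithLp.equiv 2 _) (b i)) ⬝ᵥ w) ^ 2 := by
          apply Finset.sum_congr rfl; intro i _; ring
  -- eigenvector dot ones vanishes off i0
  have hlam_ne : ∀ i, i ≠ i0 → lam i ≠ 1 := by
    intro i hi
    have h := hub i hi
    have : lam i < 1 := lt_of_le_of_lt (le_trans (le_abs_self _) h) hρlt
    exact ne_of_lt this
  have hWones : ∀ i, lam i * (((WithLp.equiv 2 _) (b i)) ⬝ᵥ ones) = ((WithLp.equiv 2 _) (b i)) ⬝ᵥ ones := by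
    intro i
    calc lam i * (((WithLp.equiv 2 _) (b i)) ⬝ᵥ ones)
        = (lam i • ((WithLp.equiv 2 _) (b i))) ⬝ᵥ ones := by rw [smul_dotProduct]; rfl
      _ = (W *ᵥ ((WithLp.equiv 2 _) (b i))) ⬝ᵥ ones := by rw [h1 i]
      _ = ((WithLp.equiv 2 _) (b i)) ⬝ᵥ (W *ᵥ ones) := (hdotW _ _).symm
      _ = ((WithLp.equiv 2 _) (b i)) ⬝ᵥ ones := by rw [honesdef]; rw [hrow]
  have hc0 : ∀ i, i ≠ i0 → ((WithLp.equiv 2 _) (b i)) ⬝ᵥ ones = 0 := by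
    intro i hi
    by_contra hne
    exact hlam_ne i hi (mul_right_cancel₀ hne (by rw [hWones i, one_mul]))
  set c : ℝ := ((WithLp.equiv 2 _) (b i0)) ⬝ᵥ ones with hcdef
  -- ones = c • b i0
  have hones : ones = fun k => c * (b i0) k := by
    have hr := b.sum_repr' ((WithLp.equiv 2 _).symm ones)
    have hcoef : ∀ i, ⟪b i, ((WithLp.equiv 2 _).symm ones)⟫ = if i = i0 then c else 0 := by
      intro i
      rw [h2, Equiv.apply_symm_apply]
      rcases eq_or_ne i i0 with h | h
      · rw [if_pos h, h, hcdef]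
      · rw [if_neg h]; exact hc0 i h
    rw [Finset.sum_congr rfl (fun i _ => by rw [hcoef i])] at hr
    simp only [ite_smul, zero_smul, Finset.sum_ite_eq', Finset.mem_univ, if_true] at hr
    have := congrArg (WithLp.equiv 2 ((i : Fin N) → (fun _ => ℝ) i)) hr
    rw [Equiv.apply_symm_apply] at this
    funext k
    have hk := congrFun this k
    simp only [WithLp.equiv_apply, WithLp.ofLp_smul] at hk
    exact hk.symm
  have hbnorm : ((WithLp.equiv 2 _) (b i0)) ⬝ᵥ ((WithLp.equiv 2 _) (b i0)) = 1 := by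
    have := b.orthonormal.1 i0
    have h := real_inner_self_eq_norm_sq (b i0)
    rw [this] at h
    rw [← h2]
    rw [h]; norm_num
  have hc2 : c * c = (N : ℝ) := by
    have hN1 : ones ⬝ᵥ ones = (N : ℝ) := by
      simp [honesdef, dotProduct]
    have hb2 : ∑ x, (b i0) x * (b i0) x = 1 := by
      simpa [dotProduct, WithLp.equiv_apply] using hbnorm
    have hN2 : ones ⬝ᵥ ones = c * c := by
      nth_rewrite 1 [hones]
      nth_rewrite 1 [hones]
      simp only [dotProduct]
      calc ∑ x, c * b i0 x * (c * b i0 x) = c * c * ∑ x, b i0 x * b i0 x := by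
            rw [Finset.mul_sum]; apply Finset.sum_congr rfl; intro k _; ring
        _ = c * c := by rw [hb2, mul_one]
    rw [← hN1, hN2]
  -- J action
  have hJact : ∀ x : Fin N → ℝ, J *ᵥ x = ((N:ℝ)⁻¹ * (ones ⬝ᵥ x)) • ones := by
    intro x
    funext j
    simp [hJdef, Matrix.mulVec, dotProduct, honesdef, Finset.mul_sum]
  have hNpos : (0:ℝ) < (N:ℝ) := by exact_mod_cast i0.pos
  have hN0 : (N : ℝ) ≠ 0 := ne_of_gt hNpos
  have harith : ∀ X : ℝ, (↑N:ℝ)⁻¹ * (c * X) * c = X := by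
    intro X
    rw [show (↑N:ℝ)⁻¹ * (c * X) * c = (c * c) * X * (↑N:ℝ)⁻¹ from by ring, hc2]
    field_simp
  -- coefficients of (W - J) *ᵥ v
  have honesv : ones ⬝ᵥ v = c * (((WithLp.equiv 2 _) (b i0)) ⬝ᵥ v) := by
    nth_rewrite 1 [hones]
    simp only [dotProduct, WithLp.equiv_apply]
    rw [Finset.mul_sum]
    apply Finset.sum_congr rfl
    intro k _
    ring
  have hcoefM : ∀ i, ((WithLp.equiv 2 _) (b i)) ⬝ᵥ ((W - J) *ᵥ v)
      = if i = i0 then 0 else lam i * (((WithLp.equiv 2 _) (b i)) ⬝ᵥ v) := by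
    intro i
    rw [Matrix.sub_mulVec, dotProduct_sub]
    have hWpart : ((WithLp.equiv 2 _) (b i)) ⬝ᵥ (W *ᵥ v)
        = lam i * (((WithLp.equiv 2 _) (b i)) ⬝ᵥ v) := by
      rw [hdotW, h1 i, smul_dotProduct]
      rfl
    have hJpart : ((WithLp.equiv 2 _) (b i)) ⬝ᵥ (J *ᵥ v)
        = if i = i0 then (((WithLp.equiv 2 _) (b i0)) ⬝ᵥ v) else 0 := by
      rw [hJact v, dotProduct_smul]
      rcases eq_or_ne i i0 with h | h
      · rw [if_pos h, h, ← hcdef, honesv, smul_eq_mul]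
        exact harith _
      · rw [if_neg h, hc0 i h, smul_eq_mul, mul_zero]
    rw [hWpart, hJpart]
    rcases eq_or_ne i i0 with h | h
    · rw [if_pos h, if_pos h, h, hi0, one_mul, sub_self]
    · rw [if_neg h, if_neg h, sub_zero]
  -- conclude
  have hρsq : ∀ i, i ≠ i0 → (lam i) ^ 2 ≤ ρ ^ 2 := by
    intro i hi
    have h := hub i hi
    have h' := abs_le.mp h
    nlinarith [h'.1, h'.2]
  calc ∑ j, (((W - J) *ᵥ v) j) ^ 2
      = ∑ i, (((WithLp.equiv 2 _) (b i)) ⬝ᵥ ((W - J) *ᵥ v)) ^ 2 := pars _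
    _ = ∑ i, (if i = i0 then 0 else lam i * (((WithLp.equiv 2 _) (b i)) ⬝ᵥ v)) ^ 2 := by
        apply Finset.sum_congr rfl; intro i _; rw [hcoefM i]
    _ ≤ ∑ i, ρ ^ 2 * (((WithLp.equiv 2 _) (b i)) ⬝ᵥ v) ^ 2 := by
        apply Finset.sum_le_sum
        intro i _
        rcases eq_or_ne i i0 with h | h
        · rw [if_pos h]
          simpa using mul_nonneg (sq_nonneg ρ) (sq_nonneg (((WithLp.equiv 2 (Fin N → ℝ)) (b i)) ⬝ᵥ v))
        · rw [if_neg h, mul_pow]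
          exact mul_le_mul_of_nonneg_right (hρsq i h) (sq_nonneg _)
    _ = ρ ^ 2 * ∑ i, (((WithLp.equiv 2 _) (b i)) ⬝ᵥ v) ^ 2 := (Finset.mul_sum _ _ _).symm
    _ = ρ ^ 2 * ∑ j, (v j) ^ 2 := by rw [← pars v]


section helpers
-- Euclidean norm of a matrix flattening
lemma frob_norm_eq {d N : ℕ} (A : Matrix (Fin d) (Fin N) ℝ) :
    ‖(WithLp.equiv 2 (Fin d × Fin N → ℝ)).symm (fun p => A p.1 p.2)‖
      = Real.sqrt (∑ i, ∑ j, (A i j) ^ 2) := by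
  rw [EuclideanSpace.norm_eq]
  congr 1
  rw [Fintype.sum_prod_type]
  apply Finset.sum_congr rfl
  intro i _
  apply Finset.sum_congr rfl
  intro j _
  simp [WithLp.equiv_symm_apply, PiLp.toLp_apply, Real.norm_eq_abs, sq_abs]

lemma frob_sub_smul {d N : ℕ} {γ : ℝ} (hγ : 0 ≤ γ) (A B : Matrix (Fin d) (Fin N) ℝ) :
    Real.sqrt (∑ i, ∑ j, ((A - γ • B) i j) ^ 2)
      ≤ Real.sqrt (∑ i, ∑ j, (A i j) ^ 2) + γ * Real.sqrt (∑ i, ∑ j, (B i j) ^ 2) := by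
  rw [← frob_norm_eq, ← frob_norm_eq, ← frob_norm_eq]
  have hv : (WithLp.equiv 2 (Fin d × Fin N → ℝ)).symm (fun p => (A - γ • B) p.1 p.2)
      = (WithLp.equiv 2 (Fin d × Fin N → ℝ)).symm (fun p => A p.1 p.2)
        - γ • (WithLp.equiv 2 (Fin d × Fin N → ℝ)).symm (fun p => B p.1 p.2) := by
    apply (WithLp.equiv 2 (Fin d × Fin N → ℝ)).injective
    funext p
    simp [Matrix.sub_apply, Matrix.smul_apply]
  rw [hv]
  calc ‖_ - γ • _‖ ≤ ‖(WithLp.equiv 2 (Fin d × Fin N → ℝ)).symm (fun p => A p.1 p.2)‖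
        + ‖γ • (WithLp.equiv 2 (Fin d × Fin N → ℝ)).symm (fun p => B p.1 p.2)‖ := norm_sub_le _ _
    _ = _ + γ * ‖(WithLp.equiv 2 (Fin d × Fin N → ℝ)).symm (fun p => B p.1 p.2)‖ := by
        rw [norm_smul, Real.norm_eq_abs, abs_of_nonneg hγ]
end helpers

theorem stmt19 {d N : ℕ} (hN : 2 ≤ N) (W : Matrix (Fin N) (Fin N) ℝ)
    (hherm : W.IsHermitian) (hnonneg : ∀ i j, 0 ≤ W i j)
    (hrow : W *ᵥ (fun _ => 1) = fun _ => 1)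
    (hcol : (fun _ => (1 : ℝ)) ᵥ* W = fun _ => 1)
    (i0 : Fin N) (hi0 : hherm.eigenvalues i0 = 1)
    (ρ : ℝ)
    (hρ : ρ = (Finset.univ.erase i0).sup'
      (by
        obtain ⟨j, hj⟩ := Fintype.exists_ne_of_one_lt_card (by simpa using (show 1 < N by omega)) i0
        exact ⟨j, Finset.mem_erase.mpr ⟨hj, Finset.mem_univ j⟩⟩)
      (fun i => |hherm.eigenvalues i|))
    (hρlt : ρ < 1) (γ : ℝ) (hγ : 0 < γ)
    (X G : ℕ → Matrix (Fin d) (Fin N) ℝ)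
    (hinit : ∀ i n m, X 1 i n = X 1 i m)
    (hrec : ∀ t, 1 ≤ t → X (t + 1) = (X t - γ • G t) * W)
    (Xbar : ℕ → Matrix (Fin d) (Fin N) ℝ)
    (hXbar : ∀ t, Xbar t = X t * ((N : ℝ)⁻¹ • Matrix.of (fun _ _ => (1 : ℝ))))
    (T : ℕ) :
    ∑ t ∈ Finset.Icc 1 T, (∑ i, ∑ j, (X t i j - Xbar t i j) ^ 2)
      ≤ γ ^ 2 * ρ ^ 2 / (1 - ρ) ^ 2
        * ∑ t ∈ Finset.Icc 1 T, (∑ i, ∑ j, (G t i j) ^ 2) := by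
  classical
  set J : Matrix (Fin N) (Fin N) ℝ := (N:ℝ)⁻¹ • Matrix.of (fun _ _ => (1:ℝ)) with hJdef
  -- basic facts about ρ
  have hub : ∀ i, i ≠ i0 → |hherm.eigenvalues i| ≤ ρ := by
    intro i hi
    rw [hρ]
    exact Finset.le_sup' (fun i => |hherm.eigenvalues i|) (Finset.mem_erase.mpr ⟨hi, Finset.mem_univ i⟩)
  have hρ0 : 0 ≤ ρ := by
    obtain ⟨j, hj⟩ := Fintype.exists_ne_of_one_lt_card (by simpa using (show 1 < N by omega)) i0
    exact le_trans (abs_nonneg _) (hub j hj)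
  have hNpos : (0:ℝ) < (N:ℝ) := by
    have : 0 < N := lt_of_lt_of_le (by norm_num) hN
    exact_mod_cast this
  have hN0 : (N:ℝ) ≠ 0 := ne_of_gt hNpos
  -- W symmetric
  have hWt : Wᵀ = W := by
    ext i j
    have := congrFun (congrFun hherm.eq i) j
    simpa using this
  -- doubly stochastic facts
  have hWJ : W * J = J := by
    ext i j
    have hri : ∑ k, W i k * 1 = 1 := congrFun hrow i
    simp only [Matrix.mul_apply, hJdef, Matrix.smul_apply, Matrix.of_apply, smul_eq_mul, mul_one]
    rw [← Finset.sum_mul]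
    rw [show ∑ k, W i k = 1 from by simpa using hri]
    rw [one_mul]
  have hJW : J * W = J := by
    ext i j
    have hcj : ∑ k, 1 * W k j = 1 := congrFun hcol j
    simp only [Matrix.mul_apply, hJdef, Matrix.smul_apply, Matrix.of_apply, smul_eq_mul, one_mul]
    rw [← Finset.mul_sum]
    rw [show ∑ k, W k j = 1 from by simpa using hcj]
    rw [mul_one]
  have hJJ : J * J = J := by
    ext i j
    simp only [Matrix.mul_apply, hJdef, Matrix.smul_apply, Matrix.of_apply, smul_eq_mul, mul_one]
    rw [Finset.sum_const, Finset.card_univ, Fintype.card_fin]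
    rw [nsmul_eq_mul]
    field_simp
  -- deviation matrices
  set D : ℕ → Matrix (Fin d) (Fin N) ℝ := fun t => X t - Xbar t with hDdef
  have hD1 : D 1 = 0 := by
    ext i j
    simp only [hDdef, Matrix.sub_apply, Matrix.zero_apply, hXbar 1]
    have : (X 1 * J) i j = X 1 i j := by
      simp only [Matrix.mul_apply, hJdef, Matrix.smul_apply, Matrix.of_apply, smul_eq_mul, mul_one]
      rw [Finset.sum_congr rfl (fun k _ => by rw [hinit i k j])]
      rw [Finset.sum_const, Finset.card_univ, Fintype.card_fin]
      rw [nsmul_eq_mul]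
      field_simp
    rw [hJdef] at this
    exact sub_eq_zero.mpr this.symm
  have hDrec : ∀ t, 1 ≤ t → D (t + 1) = (D t - γ • G t) * (W - J) := by
    intro t ht
    have hX1 : X (t + 1) = (X t - γ • G t) * W := hrec t ht
    simp only [hDdef]
    rw [hXbar (t+1), hX1, hXbar t]
    change (X t - γ • G t) * W - (X t - γ • G t) * W * J = (X t - X t * J - γ • G t) * (W - J)
    rw [Matrix.mul_assoc ((X t - γ • G t)) W J, hWJ]
    rw [Matrix.sub_mul (X t - X t * J) (γ • G t) (W - J)]
    rw [Matrix.sub_mul (X t) (X t * J) (W - J)]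
    rw [Matrix.mul_sub (X t * J) W J, Matrix.mul_assoc (X t) J W, Matrix.mul_assoc (X t) J J,
      hJW, hJJ, sub_self, sub_zero]
    rw [Matrix.sub_mul (X t) (γ • G t) W, Matrix.sub_mul (X t) (γ • G t) J]
    rw [Matrix.mul_sub (X t) W J, Matrix.mul_sub (γ • G t) W J]
    abel
  -- contraction of Frobenius norm
  have hcontr : ∀ A : Matrix (Fin d) (Fin N) ℝ,
      ∑ i, ∑ j, ((A * (W - J)) i j) ^ 2 ≤ ρ ^ 2 * ∑ i, ∑ j, (A i j) ^ 2 := by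
    intro A
    have hMsym : ∀ k j, (W - J) k j = (W - J) j k := by
      intro k j
      have h1 : W k j = W j k := by
        have h2 := congrFun (congrFun hWt k) j
        rw [Matrix.transpose_apply] at h2
        exact h2.symm
      simp only [Matrix.sub_apply, hJdef, Matrix.smul_apply, Matrix.of_apply, h1]
    have hrowwise : ∀ i, ∑ j, ((A * (W - J)) i j) ^ 2 ≤ ρ ^ 2 * ∑ j, (A i j) ^ 2 := by
      intro i
      have hv := spectral_aux W hherm hrow i0 hi0 hub hρlt (A i)
      have heq : ∀ j, (A * (W - J)) i j = ((W - J) *ᵥ (A i)) j := by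
        intro j
        simp only [Matrix.mul_apply, Matrix.mulVec, dotProduct]
        apply Finset.sum_congr rfl
        intro k _
        rw [hMsym k j]
        ring
      rw [Finset.sum_congr rfl (fun j _ => by rw [heq j])]
      rw [hJdef]
      exact hv
    calc ∑ i, ∑ j, ((A * (W - J)) i j) ^ 2 ≤ ∑ i, ρ ^ 2 * ∑ j, (A i j) ^ 2 :=
          Finset.sum_le_sum fun i _ => hrowwise i
      _ = ρ ^ 2 * ∑ i, ∑ j, (A i j) ^ 2 := (Finset.mul_sum _ _ _).symm
  -- scalar sequences
  set s : ℕ → ℝ := fun t => Real.sqrt (∑ i, ∑ j, (D t i j) ^ 2) with hsdef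
  set g : ℕ → ℝ := fun t => γ * Real.sqrt (∑ i, ∑ j, (G t i j) ^ 2) with hgdef
  have hsumnn : ∀ (A : Matrix (Fin d) (Fin N) ℝ), 0 ≤ ∑ i, ∑ j, (A i j) ^ 2 :=
    fun A => Finset.sum_nonneg fun i _ => Finset.sum_nonneg fun j _ => sq_nonneg _
  have hs0 : ∀ t, 0 ≤ s t := fun t => Real.sqrt_nonneg _
  have hg0 : ∀ t, 0 ≤ g t := fun t => mul_nonneg hγ.le (Real.sqrt_nonneg _)
  have hssq : ∀ t, (s t) ^ 2 = ∑ i, ∑ j, (D t i j) ^ 2 := fun t => Real.sq_sqrt (hsumnn _)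
  have hs1 : s 1 = 0 := by
    rw [hsdef]
    simp only [hD1, Matrix.zero_apply]
    simp
  have hstep : ∀ t, 1 ≤ t → s (t + 1) ≤ ρ * (s t + g t) := by
    intro t ht
    have h1 : (s (t+1)) ^ 2 ≤ ρ ^ 2 * ∑ i, ∑ j, ((D t - γ • G t) i j) ^ 2 := by
      rw [hssq, hDrec t ht]
      exact hcontr _
    have h2 : s (t + 1) ≤ ρ * Real.sqrt (∑ i, ∑ j, ((D t - γ • G t) i j) ^ 2) := by
      have ha := Real.sqrt_le_sqrt h1
      rw [Real.sqrt_sq (hs0 _)] at ha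
      rwa [Real.sqrt_mul (sq_nonneg ρ), Real.sqrt_sq hρ0] at ha
    calc s (t + 1) ≤ ρ * Real.sqrt (∑ i, ∑ j, ((D t - γ • G t) i j) ^ 2) := h2
      _ ≤ ρ * (s t + g t) := by
          apply mul_le_mul_of_nonneg_left _ hρ0
          rw [hsdef, hgdef]
          exact frob_sub_smul hγ.le (D t) (G t)
  -- apply scalar lemma
  have hmain := scalar_aux hρ0 hρlt s g hs0 hg0 hs1 hstep T
  have hL : ∑ t ∈ Finset.Icc 1 T, (∑ i, ∑ j, (X t i j - Xbar t i j) ^ 2)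
      = ∑ t ∈ Finset.Icc 1 T, (s t) ^ 2 := by
    apply Finset.sum_congr rfl
    intro t _
    rw [hssq]
    simp [hDdef]
  rw [hL]
  calc ∑ t ∈ Finset.Icc 1 T, (s t) ^ 2
      ≤ ρ ^ 2 / (1 - ρ) ^ 2 * ∑ t ∈ Finset.Icc 1 T, (g t) ^ 2 := hmain
    _ = γ ^ 2 * ρ ^ 2 / (1 - ρ) ^ 2 * ∑ t ∈ Finset.Icc 1 T, (∑ i, ∑ j, (G t i j) ^ 2) := by
        rw [Finset.mul_sum, Finset.mul_sum]
        apply Finset.sum_congr rfl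
        intro t _
        rw [hgdef]
        rw [mul_pow, Real.sq_sqrt (hsumnn _)]
        ring
end
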